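/- arXiv:1310.3030 — 3 statements merged into one kernel-verified Lean document; each statement's English description precedes it below -/
import Mathlib

section
/- For a rack X and fixed x ∈ X, with h_x : C_n^R(X) → C_{n+1}^R(X) given by h_x(x_1,...,x_n) = (x_1,...,x_n,x), the maps (-1)^{n+1} h_x form a chain homotopy between the identity and the chain map *_x: ∂_{n+1}((-1)^{n+1} h_x) + (-1)^n h_x ∂_n = Id - *_x. Consequently *_x induces the identity on rack homology. -/
/-- The face map `d_i^{(*_0)}` (1-based index `i = p+1`): delete the `p`-th entry. -/
def faceZero {X : Type*} {n : ℕ} (p : Fin (n + 1)) (x : Fin (n + 1) → X) : Fin n → X :=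
  fun j => x (p.succAbove j)

/-- The face map `d_i^{(*)}` (1-based index `i = p+1`): delete the `p`-th entry and
act by `x_p` on all earlier entries. -/
def faceStar {X : Type*} (star : X → X → X) {n : ℕ} (p : Fin (n + 1))
    (x : Fin (n + 1) → X) : Fin n → X :=
  fun j => if (p.succAbove j : ℕ) < (p : ℕ) then star (x (p.succAbove j)) (x p)
           else x (p.succAbove j)

/-- The rack boundary `∂(x_1,…,x_n) = Σ_{i=2}^n (-1)^i (d_i^{(*_0)} - d_i^{(*)})`,
on `C_{n+1}^R(X) = ℤ X^{n+1}`. -/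
noncomputable def rackBoundary {X : Type*} (star : X → X → X) (n : ℕ) :
    ((Fin (n + 1) → X) →₀ ℤ) →ₗ[ℤ] ((Fin n → X) →₀ ℤ) :=
  ∑ j : Fin n, ((-1 : ℤ) ^ ((j : ℕ) + 2)) •
    (Finsupp.lmapDomain ℤ ℤ (faceZero j.succ) - Finsupp.lmapDomain ℤ ℤ (faceStar star j.succ))

/-- The coordinatewise right-translation map `*_x` on `ℤX^m`. -/
noncomputable def mulMap {X : Type*} (star : X → X → X) (m : ℕ) (x : X) :
    ((Fin m → X) →₀ ℤ) →ₗ[ℤ] ((Fin m → X) →₀ ℤ) :=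
  Finsupp.lmapDomain ℤ ℤ (fun t : Fin m → X => fun j => star (t j) x)

/-- The homotopy `h_x(x_1,…,x_m) = (x_1,…,x_m,x)` on `ℤX^m`. -/
noncomputable def hMap {X : Type*} (m : ℕ) (x : X) :
    ((Fin m → X) →₀ ℤ) →ₗ[ℤ] ((Fin (m + 1) → X) →₀ ℤ) :=
  Finsupp.lmapDomain ℤ ℤ (fun t : Fin m → X => Fin.snoc t x)

-- key pointwise lemmas
lemma faceZero_castSucc_snoc {X : Type*} {n : ℕ} (p : Fin (n + 1)) (t : Fin (n + 1) → X)
    (x : X) : faceZero p.castSucc (Fin.snoc t x) = Fin.snoc (faceZero p t) x := by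
  funext i
  refine Fin.lastCases ?_ (fun i => ?_) i
  · have h : p.castSucc.succAbove (Fin.last n) = Fin.last (n + 1) := by
      rw [Fin.succAbove_of_le_castSucc]
      · simp [Fin.succ_last]
      · simp [Fin.le_castSucc_iff, Fin.lt_def] <;> omega
    simp [faceZero, h]
  · simp [faceZero, Fin.castSucc_succAbove_castSucc]

lemma faceStar_castSucc_snoc {X : Type*} (star : X → X → X) {n : ℕ} (p : Fin (n + 1))
    (t : Fin (n + 1) → X) (x : X) :
    faceStar star p.castSucc (Fin.snoc t x) = Fin.snoc (faceStar star p t) x := by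
  funext i
  refine Fin.lastCases ?_ (fun i => ?_) i
  · have h : p.castSucc.succAbove (Fin.last n) = Fin.last (n + 1) := by
      rw [Fin.succAbove_of_le_castSucc]
      · simp [Fin.succ_last]
      · simp [Fin.le_castSucc_iff, Fin.lt_def] <;> omega
    have : ¬ ((Fin.last (n+1) : Fin (n+2)) : ℕ) < (p.castSucc : ℕ) := by
      simp [Fin.lt_def] <;> omega
    simp [faceStar, h, this]
  · simp only [faceStar, Fin.castSucc_succAbove_castSucc, Fin.coe_castSucc, Fin.snoc_castSucc]

lemma faceZero_last_snoc {X : Type*} {n : ℕ} (t : Fin (n + 1) → X) (x : X) :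
    faceZero (Fin.last (n + 1)) (Fin.snoc t x) = t := by
  funext i
  simp [faceZero, Fin.succAbove_last]

lemma faceStar_last_snoc {X : Type*} (star : X → X → X) {n : ℕ} (t : Fin (n + 1) → X) (x : X) :
    faceStar star (Fin.last (n + 1)) (Fin.snoc t x) = fun i => star (t i) x := by
  funext i
  have : ((Fin.last (n+1)).succAbove i : ℕ) < ((Fin.last (n+1)) : ℕ) := by
    simp [Fin.succAbove_last, Fin.lt_def] <;> omega
  simp [faceStar, this, Fin.succAbove_last]
  intro h; exact absurd i.isLt (by omega)


/-- For a rack `X` and fixed `x`, the maps `(-1)^{m+1} h_x` form a chain homotopy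
between the identity and `*_x`: on `C_{n+1}^R(X)`,
`∂((-1)^{n+2} h_x) + (-1)^{n+1} h_x ∂ = Id - *_x`. -/
theorem stmt14 {X : Type*} (star : X → X → X)
    (hsd : ∀ a b c : X, star (star a b) c = star (star a c) (star b c))
    (hinv : ∀ b : X, Function.Bijective (fun a => star a b)) (x : X) (n : ℕ) :
    ((-1 : ℤ) ^ (n + 2)) • ((rackBoundary star (n + 1)).comp (hMap (n + 1) x)) +
      ((-1 : ℤ) ^ (n + 1)) • ((hMap n x).comp (rackBoundary star n)) =
    LinearMap.id - mulMap star (n + 1) x := by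
  apply Finsupp.lhom_ext
  intro t b
  have hsum : ∀ (m : ℕ) (u : Fin (m + 1) → X),
      rackBoundary star m (Finsupp.single u b) =
        ∑ j : Fin m, ((-1 : ℤ) ^ ((j : ℕ) + 2)) •
          (Finsupp.single (faceZero j.succ u) b -
            Finsupp.single (faceStar star j.succ u) b) := by
    intro m u
    simp [rackBoundary, Finsupp.lmapDomain_apply, Finsupp.mapDomain_single]
  simp only [LinearMap.add_apply, LinearMap.smul_apply, LinearMap.comp_apply,
    LinearMap.sub_apply, LinearMap.id_apply]
  have hh : ∀ (m : ℕ) (u : Fin m → X),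
      hMap m x (Finsupp.single u b) = Finsupp.single (Fin.snoc u x) b := by
    intro m u; simp [hMap, Finsupp.lmapDomain_apply, Finsupp.mapDomain_single]
  rw [hh, hsum, hsum, map_sum, Fin.sum_univ_castSucc]
  simp only [map_smul, map_sub, hh, mulMap, Finsupp.lmapDomain_apply, Finsupp.mapDomain_single,
    Fin.succ_castSucc, Fin.succ_last, Fin.coe_castSucc, Fin.val_last,
    faceZero_castSucc_snoc, faceStar_castSucc_snoc, faceZero_last_snoc, faceStar_last_snoc]
  have ha : ((-1 : ℤ) ^ (n + 1)) = -((-1 : ℤ) ^ (n + 2)) := by ring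
  rw [ha, smul_add, smul_smul, ← pow_add]
  have h1 : ((-1 : ℤ)) ^ (n + 2 + (n + 2)) = 1 := Even.neg_one_pow ⟨n + 2, by ring⟩
  rw [h1, one_smul, neg_smul]
  abel
end

section
/- Let (X;*) be a shelf and E a right X-shelf-set (so (e*x_1)*x_2 = (e*x_2)*(x_1*x_2)). Define on the disjoint union X ⊔ E an operation extending * on X and the action of X on E, with a * y = a for all a ∈ X ⊔ E and y ∈ E. Then X ⊔ E is a shelf. Moreover, if X is a rack and E an X-rack-set (the action maps e ↦ e*b are bijective), then X ⊔ E is a rack; if X is a quandle, X ⊔ E is a quandle. -/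
/-- The operation on the disjoint union `X ⊔ E` extending `*` on `X` and the
action of `X` on `E`, with `a * y = a` whenever `y ∈ E`. -/
def sumOp {X E : Type*} (star : X → X → X) (act : E → X → E) :
    X ⊕ E → X ⊕ E → X ⊕ E
  | Sum.inl a, Sum.inl b => Sum.inl (star a b)
  | Sum.inl a, Sum.inr _ => Sum.inl a
  | Sum.inr e, Sum.inl b => Sum.inr (act e b)
  | Sum.inr e, Sum.inr _ => Sum.inr e

/-- If `(X;*)` is a shelf and `E` a right `X`-shelf-set, then `X ⊔ E` is a shelf.
If moreover `X` is a rack and `E` an `X`-rack-set then `X ⊔ E` is a rack,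
and if `X` is a quandle then `X ⊔ E` is a quandle. -/
theorem stmt16 {X E : Type*} (star : X → X → X) (act : E → X → E)
    (hX : ∀ a b c : X, star (star a b) c = star (star a c) (star b c))
    (hE : ∀ (e : E) (x₁ x₂ : X), act (act e x₁) x₂ = act (act e x₂) (star x₁ x₂)) :
    (∀ a b c : X ⊕ E,
      sumOp star act (sumOp star act a b) c =
        sumOp star act (sumOp star act a c) (sumOp star act b c)) ∧
    ((∀ b : X, Function.Bijective (fun a => star a b)) →
      (∀ b : X, Function.Bijective (fun e => act e b)) →
      ∀ b : X ⊕ E, Function.Bijective (fun a => sumOp star act a b)) ∧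
    ((∀ a : X, star a a = a) → ∀ a : X ⊕ E, sumOp star act a a = a) := by
  refine ⟨?_, ?_, ?_⟩
  · rintro (a|a) (b|b) (c|c) <;> simp only [sumOp]
    · rw [hX]
    · rw [hE]
  · rintro hR hRE (b|b)
    · constructor
      · rintro (a|a) (a'|a') h <;> simp [sumOp] at h ⊢
        · exact (hR b).1 h
        · exact (hRE b).1 h
      · rintro (c|c)
        · obtain ⟨a, ha⟩ := (hR b).2 c
          exact ⟨Sum.inl a, by simp [sumOp, ha]⟩
        · obtain ⟨e, he⟩ := (hRE b).2 c
          exact ⟨Sum.inr e, by simp [sumOp, he]⟩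
    · constructor
      · rintro (a|a) (a'|a') h <;> simp [sumOp] at h ⊢ <;> exact h
      · rintro (c|c)
        · exact ⟨Sum.inl c, rfl⟩
        · exact ⟨Sum.inr c, rfl⟩
  · rintro hq (a|a) <;> simp [sumOp, hq]
end

section
/- For a rack X, the twisted boundary ∂^T = t·∂^{(*_0)} − ∂^{(*)} on C_n^T(X) = ℤ[t^{±1}]X^n satisfies ∂^T ∂^T = 0, and for any x ∈ X the coordinatewise right-multiplication map *_x induces multiplication by t on twisted rack homology (via the chain homotopy h_x(x_1,...,x_n) = (x_1,...,x_n,x)). -/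
open LaurentPolynomial in
/-- The untwisted part `∂^{(*_0)} = Σ_{i=1}^n (-1)^i d_i^{(*_0)}` with Laurent
polynomial coefficients, on `C^T_{n+1}(X) = ℤ[t^{±1}]X^{n+1}`. -/
noncomputable def tBdZero (X : Type*) (n : ℕ) :
    ((Fin (n + 1) → X) →₀ LaurentPolynomial ℤ) →ₗ[LaurentPolynomial ℤ]
      ((Fin n → X) →₀ LaurentPolynomial ℤ) :=
  ∑ p : Fin (n + 1), ((-1 : ℤ) ^ ((p : ℕ) + 1)) •
    Finsupp.lmapDomain (LaurentPolynomial ℤ) (LaurentPolynomial ℤ) (faceZero p)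

/-- The part `∂^{(*)} = Σ_{i=1}^n (-1)^i d_i^{(*)}` with Laurent polynomial
coefficients. -/
noncomputable def tBdStar {X : Type*} (star : X → X → X) (n : ℕ) :
    ((Fin (n + 1) → X) →₀ LaurentPolynomial ℤ) →ₗ[LaurentPolynomial ℤ]
      ((Fin n → X) →₀ LaurentPolynomial ℤ) :=
  ∑ p : Fin (n + 1), ((-1 : ℤ) ^ ((p : ℕ) + 1)) •
    Finsupp.lmapDomain (LaurentPolynomial ℤ) (LaurentPolynomial ℤ) (faceStar star p)

/-- The twisted boundary `∂^T = t·∂^{(*_0)} − ∂^{(*)}`. -/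
noncomputable def tBd {X : Type*} (star : X → X → X) (n : ℕ) :
    ((Fin (n + 1) → X) →₀ LaurentPolynomial ℤ) →ₗ[LaurentPolynomial ℤ]
      ((Fin n → X) →₀ LaurentPolynomial ℤ) :=
  (LaurentPolynomial.T 1 : LaurentPolynomial ℤ) • tBdZero X n - tBdStar star n

/-- Coordinatewise right translation `*_x` on `ℤ[t^{±1}]X^m`. -/
noncomputable def tMulMap {X : Type*} (star : X → X → X) (m : ℕ) (x : X) :
    ((Fin m → X) →₀ LaurentPolynomial ℤ) →ₗ[LaurentPolynomial ℤ]
      ((Fin m → X) →₀ LaurentPolynomial ℤ) :=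
  Finsupp.lmapDomain (LaurentPolynomial ℤ) (LaurentPolynomial ℤ)
    (fun t : Fin m → X => fun j => star (t j) x)

/-- The homotopy `h_x(x_1,…,x_m) = (x_1,…,x_m,x)` on `ℤ[t^{±1}]X^m`. -/
noncomputable def tHMap {X : Type*} (m : ℕ) (x : X) :
    ((Fin m → X) →₀ LaurentPolynomial ℤ) →ₗ[LaurentPolynomial ℤ]
      ((Fin (m + 1) → X) →₀ LaurentPolynomial ℤ) :=
  Finsupp.lmapDomain (LaurentPolynomial ℤ) (LaurentPolynomial ℤ)
    (fun t : Fin m → X => Fin.snoc t x)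

section FnLemmas
variable {X : Type*} (star : X → X → X)

lemma succAbove_val {m : ℕ} (p : Fin (m+1)) (j : Fin m) :
    ((p.succAbove j : Fin (m+1)) : ℕ) = if (j:ℕ) < (p:ℕ) then (j:ℕ) else (j:ℕ)+1 := by
  rw [Fin.succAbove]
  split_ifs with h1 h2 <;> simp_all [Fin.lt_def]

lemma xeq {m : ℕ} (x : Fin m → X) {i i' : Fin m} (h : (i:ℕ) = (i':ℕ)) : x i = x i' := by
  congr 1; exact Fin.ext h

lemma faceZero_lt {m : ℕ} (p : Fin (m+1)) (x : Fin (m+1) → X) (j : Fin m)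
    (h : (j:ℕ) < (p:ℕ)) : faceZero p x j = x ⟨(j:ℕ), by omega⟩ :=
  xeq x (by rw [succAbove_val, if_pos h])

lemma faceZero_ge {m : ℕ} (p : Fin (m+1)) (x : Fin (m+1) → X) (j : Fin m)
    (h : (p:ℕ) ≤ (j:ℕ)) : faceZero p x j = x ⟨(j:ℕ)+1, by omega⟩ :=
  xeq x (by rw [succAbove_val, if_neg (by omega)])

lemma faceStar_lt {m : ℕ} (p : Fin (m+1)) (x : Fin (m+1) → X) (j : Fin m)
    (h : (j:ℕ) < (p:ℕ)) :
    faceStar star p x j = star (x ⟨(j:ℕ), by omega⟩) (x p) := by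
  unfold faceStar
  have hv : ((p.succAbove j):ℕ) = (j:ℕ) := by rw [succAbove_val, if_pos h]
  rw [if_pos (show ((p.succAbove j):ℕ) < (p:ℕ) by omega),
    xeq x (i' := ⟨(j:ℕ), by omega⟩) hv]

lemma faceStar_ge {m : ℕ} (p : Fin (m+1)) (x : Fin (m+1) → X) (j : Fin m)
    (h : (p:ℕ) ≤ (j:ℕ)) : faceStar star p x j = x ⟨(j:ℕ)+1, by omega⟩ := by
  unfold faceStar
  have hv : ((p.succAbove j):ℕ) = (j:ℕ)+1 := by rw [succAbove_val, if_neg (by omega)]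
  rw [if_neg (by omega), xeq x (i' := ⟨(j:ℕ)+1, by omega⟩) hv]

end FnLemmas

section CompLemmas
variable {X : Type*} (star : X → X → X)
  (hsd : ∀ a b c : X, star (star a b) c = star (star a c) (star b c))
  {n : ℕ} (p : Fin (n+1)) (q : Fin (n+2))
  (hpq : (p:ℕ) < (q:ℕ)) (x : Fin (n+2) → X)

include hpq

lemma compZZ : faceZero p (faceZero q x) =
    faceZero (⟨(q:ℕ)-1, by omega⟩ : Fin (n+1)) (faceZero (⟨(p:ℕ), by omega⟩ : Fin (n+2)) x) := by
  funext j
  rcases Nat.lt_or_ge (j:ℕ) (p:ℕ) with h1 | h1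
  · rw [faceZero_lt p _ j h1, faceZero_lt _ _ j (by simp <;> omega),
      faceZero_lt q x _ (by simp <;> omega), faceZero_lt _ x _ (by simp <;> omega)]
  rcases Nat.lt_or_ge ((j:ℕ)+1) (q:ℕ) with h2 | h2
  · rw [faceZero_ge p _ j h1, faceZero_lt q x _ (by simp <;> omega),
      faceZero_lt _ _ j (by simp <;> omega), faceZero_ge _ x _ (by simp <;> omega)]
  · rw [faceZero_ge p _ j h1, faceZero_ge q x _ (by simp <;> omega),
      faceZero_ge _ _ j (by simp <;> omega), faceZero_ge _ x _ (by simp <;> omega)]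

lemma compZS : faceZero p (faceStar star q x) =
    faceStar star (⟨(q:ℕ)-1, by omega⟩ : Fin (n+1)) (faceZero (⟨(p:ℕ), by omega⟩ : Fin (n+2)) x) := by
  funext j
  rcases Nat.lt_or_ge (j:ℕ) (p:ℕ) with h1 | h1
  · rw [faceZero_lt p (faceStar star q x) j h1,
      faceStar_lt star q x ⟨(j:ℕ), by omega⟩ (by simp <;> omega),
      faceStar_lt star ⟨(q:ℕ)-1, by omega⟩ (faceZero ⟨(p:ℕ), by omega⟩ x) j (by simp <;> omega),
      faceZero_lt ⟨(p:ℕ), by omega⟩ x ⟨(j:ℕ), by omega⟩ (by simp <;> omega),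
      faceZero_ge ⟨(p:ℕ), by omega⟩ x ⟨(q:ℕ)-1, by omega⟩ (by simp <;> omega)]
    exact congrArg₂ _ (xeq x (by simp)) (xeq x (by simp <;> omega))
  rcases Nat.lt_or_ge ((j:ℕ)+1) (q:ℕ) with h2 | h2
  · rw [faceZero_ge p (faceStar star q x) j h1,
      faceStar_lt star q x ⟨(j:ℕ)+1, by omega⟩ (by simp <;> omega),
      faceStar_lt star ⟨(q:ℕ)-1, by omega⟩ (faceZero ⟨(p:ℕ), by omega⟩ x) j (by simp <;> omega),
      faceZero_ge ⟨(p:ℕ), by omega⟩ x ⟨(j:ℕ), by omega⟩ (by simp <;> omega),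
      faceZero_ge ⟨(p:ℕ), by omega⟩ x ⟨(q:ℕ)-1, by omega⟩ (by simp <;> omega)]
    exact congrArg₂ _ (xeq x (by simp)) (xeq x (by simp <;> omega))
  · rw [faceZero_ge p (faceStar star q x) j h1,
      faceStar_ge star q x ⟨(j:ℕ)+1, by omega⟩ (by simp <;> omega),
      faceStar_ge star ⟨(q:ℕ)-1, by omega⟩ (faceZero ⟨(p:ℕ), by omega⟩ x) j (by simp <;> omega),
      faceZero_ge ⟨(p:ℕ), by omega⟩ x ⟨(j:ℕ)+1, by omega⟩ (by simp <;> omega)]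

lemma compSZ : faceStar star p (faceZero q x) =
    faceZero (⟨(q:ℕ)-1, by omega⟩ : Fin (n+1)) (faceStar star (⟨(p:ℕ), by omega⟩ : Fin (n+2)) x) := by
  funext j
  rcases Nat.lt_or_ge (j:ℕ) (p:ℕ) with h1 | h1
  · rw [faceStar_lt star p (faceZero q x) j h1,
      faceZero_lt q x ⟨(j:ℕ), by omega⟩ (by simp <;> omega),
      faceZero_lt q x p hpq,
      faceZero_lt ⟨(q:ℕ)-1, by omega⟩ (faceStar star ⟨(p:ℕ), by omega⟩ x) j (by simp <;> omega),
      faceStar_lt star ⟨(p:ℕ), by omega⟩ x ⟨(j:ℕ), by omega⟩ (by simp <;> omega)]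
  rcases Nat.lt_or_ge ((j:ℕ)+1) (q:ℕ) with h2 | h2
  · rw [faceStar_ge star p (faceZero q x) j h1,
      faceZero_lt q x ⟨(j:ℕ)+1, by omega⟩ (by simp <;> omega),
      faceZero_lt ⟨(q:ℕ)-1, by omega⟩ (faceStar star ⟨(p:ℕ), by omega⟩ x) j (by simp <;> omega),
      faceStar_ge star ⟨(p:ℕ), by omega⟩ x ⟨(j:ℕ), by omega⟩ (by simp <;> omega)]
  · rw [faceStar_ge star p (faceZero q x) j h1,
      faceZero_ge q x ⟨(j:ℕ)+1, by omega⟩ (by simp <;> omega),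
      faceZero_ge ⟨(q:ℕ)-1, by omega⟩ (faceStar star ⟨(p:ℕ), by omega⟩ x) j (by simp <;> omega),
      faceStar_ge star ⟨(p:ℕ), by omega⟩ x ⟨(j:ℕ)+1, by omega⟩ (by simp <;> omega)]

include hsd in
lemma compSS : faceStar star p (faceStar star q x) =
    faceStar star (⟨(q:ℕ)-1, by omega⟩ : Fin (n+1)) (faceStar star (⟨(p:ℕ), by omega⟩ : Fin (n+2)) x) := by
  funext j
  rcases Nat.lt_or_ge (j:ℕ) (p:ℕ) with h1 | h1
  · rw [faceStar_lt star p (faceStar star q x) j h1,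
      faceStar_lt star q x ⟨(j:ℕ), by omega⟩ (by simp <;> omega),
      faceStar_lt star q x p hpq,
      faceStar_lt star ⟨(q:ℕ)-1, by omega⟩ (faceStar star ⟨(p:ℕ), by omega⟩ x) j (by simp <;> omega),
      faceStar_lt star ⟨(p:ℕ), by omega⟩ x ⟨(j:ℕ), by omega⟩ (by simp <;> omega),
      faceStar_ge star ⟨(p:ℕ), by omega⟩ x ⟨(q:ℕ)-1, by omega⟩ (by simp <;> omega)]
    conv_rhs => rw [hsd]
    exact congrArg₂ _ (congrArg₂ _ (xeq x (by first | rfl | simp <;> omega)) (xeq x (by first | rfl | simp <;> omega)))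
      (congrArg₂ _ (xeq x (by first | rfl | simp <;> omega)) (xeq x (by first | rfl | simp <;> omega)))
  rcases Nat.lt_or_ge ((j:ℕ)+1) (q:ℕ) with h2 | h2
  · rw [faceStar_ge star p (faceStar star q x) j h1,
      faceStar_lt star q x ⟨(j:ℕ)+1, by omega⟩ (by simp <;> omega),
      faceStar_lt star ⟨(q:ℕ)-1, by omega⟩ (faceStar star ⟨(p:ℕ), by omega⟩ x) j (by simp <;> omega),
      faceStar_ge star ⟨(p:ℕ), by omega⟩ x ⟨(j:ℕ), by omega⟩ (by simp <;> omega),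
      faceStar_ge star ⟨(p:ℕ), by omega⟩ x ⟨(q:ℕ)-1, by omega⟩ (by simp <;> omega)]
    exact congrArg₂ _ (xeq x (by first | rfl | simp <;> omega)) (xeq x (by first | rfl | simp <;> omega))
  · rw [faceStar_ge star p (faceStar star q x) j h1,
      faceStar_ge star q x ⟨(j:ℕ)+1, by omega⟩ (by simp <;> omega),
      faceStar_ge star ⟨(q:ℕ)-1, by omega⟩ (faceStar star ⟨(p:ℕ), by omega⟩ x) j (by simp <;> omega),
      faceStar_ge star ⟨(p:ℕ), by omega⟩ x ⟨(j:ℕ)+1, by omega⟩ (by simp <;> omega)]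

end CompLemmas

section MapLevel
open LaurentPolynomial

local notation "R" => LaurentPolynomial ℤ

variable {X : Type*} (star : X → X → X)

noncomputable def Dmap {n : ℕ} (p : Fin (n+1)) :
    ((Fin (n+1) → X) →₀ R) →ₗ[R] ((Fin n → X) →₀ R) :=
  (T 1 : R) • Finsupp.lmapDomain R R (faceZero p) - Finsupp.lmapDomain R R (faceStar star p)

lemma sumComp {ι M N P : Type*} [AddCommMonoid M] [AddCommMonoid N] [AddCommMonoid P]
    [Module R M] [Module R N] [Module R P]
    (s : Finset ι) (f : ι → (M →ₗ[R] N)) (g : P →ₗ[R] M) :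
    (∑ i ∈ s, f i).comp g = ∑ i ∈ s, (f i).comp g := by
  ext z
  simp [LinearMap.sum_apply]

lemma compSum {ι M N P : Type*} [AddCommMonoid M] [AddCommMonoid N] [AddCommMonoid P]
    [Module R M] [Module R N] [Module R P]
    (s : Finset ι) (f : ι → (P →ₗ[R] M)) (g : M →ₗ[R] N) :
    g.comp (∑ i ∈ s, f i) = ∑ i ∈ s, g.comp (f i) := by
  ext z
  simp [LinearMap.sum_apply, map_sum]

lemma tBd_eq (n : ℕ) : tBd star n = ∑ p : Fin (n+1), ((-1:ℤ)^((p:ℕ)+1)) • Dmap star p := by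
  unfold tBd tBdZero tBdStar Dmap
  refine Eq.symm ?_
  calc ∑ p : Fin (n+1), ((-1:ℤ)^((p:ℕ)+1)) •
        ((T 1 : R) • Finsupp.lmapDomain R R (faceZero p) - Finsupp.lmapDomain R R (faceStar star p))
      = ∑ p : Fin (n+1), ((T 1 : R) • (((-1:ℤ)^((p:ℕ)+1)) • Finsupp.lmapDomain R R (faceZero p)) -
          ((-1:ℤ)^((p:ℕ)+1)) • Finsupp.lmapDomain R R (faceStar star p)) :=
        Finset.sum_congr rfl fun p _ => by module
    _ = (∑ p : Fin (n+1), (T 1 : R) • (((-1:ℤ)^((p:ℕ)+1)) • Finsupp.lmapDomain R R (faceZero p))) -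
          ∑ p : Fin (n+1), ((-1:ℤ)^((p:ℕ)+1)) • Finsupp.lmapDomain R R (faceStar star p) :=
        Finset.sum_sub_distrib (f := fun p : Fin (n+1) => (T 1 : R) • (((-1:ℤ)^((p:ℕ)+1)) • Finsupp.lmapDomain R R (faceZero (X := X) p))) (g := fun p : Fin (n+1) => ((-1:ℤ)^((p:ℕ)+1)) • Finsupp.lmapDomain R R (faceStar star p))
    _ = _ := by rw [← Finset.smul_sum]

lemma Dcomp {n : ℕ} (hsd : ∀ a b c : X, star (star a b) c = star (star a c) (star b c))
    (p : Fin (n+1)) (q : Fin (n+2)) (hpq : (p:ℕ) < (q:ℕ)) :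
    (Dmap star p).comp (Dmap star q) =
      (Dmap star (⟨(q:ℕ)-1, by omega⟩ : Fin (n+1))).comp
        (Dmap star (⟨(p:ℕ), by omega⟩ : Fin (n+2))) := by
  have hzz : faceZero p ∘ faceZero q =
      faceZero (X := X) (⟨(q:ℕ)-1, by omega⟩ : Fin (n+1)) ∘ faceZero ⟨(p:ℕ), by omega⟩ :=
    funext fun x => compZZ p q hpq x
  have hzs : faceZero p ∘ faceStar star q =
      faceStar star (⟨(q:ℕ)-1, by omega⟩ : Fin (n+1)) ∘ faceZero (X := X) ⟨(p:ℕ), by omega⟩ :=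
    funext fun x => compZS star p q hpq x
  have hsz : faceStar star p ∘ faceZero q =
      faceZero (⟨(q:ℕ)-1, by omega⟩ : Fin (n+1)) ∘ faceStar star ⟨(p:ℕ), by omega⟩ :=
    funext fun x => compSZ star p q hpq x
  have hss : faceStar star p ∘ faceStar star q =
      faceStar star (⟨(q:ℕ)-1, by omega⟩ : Fin (n+1)) ∘ faceStar star ⟨(p:ℕ), by omega⟩ :=
    funext fun x => compSS star hsd p q hpq x
  unfold Dmap
  simp only [LinearMap.sub_comp, LinearMap.comp_sub, LinearMap.smul_comp, LinearMap.comp_smul,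
    ← Finsupp.lmapDomain_comp, hzz, hzs, hsz, hss]
  module

end MapLevel

section Part1
open LaurentPolynomial
variable {X : Type*} (star : X → X → X)
  (hsd : ∀ a b c : X, star (star a b) c = star (star a c) (star b c))

include hsd in
lemma Dcomp' {n : ℕ} (a : Fin (n+1)) (b : Fin (n+2)) (hba : (b:ℕ) ≤ (a:ℕ)) :
    (Dmap star (⟨(b:ℕ), by omega⟩ : Fin (n+1))).comp
        (Dmap star (⟨(a:ℕ)+1, by have := a.isLt; omega⟩ : Fin (n+2))) =
      (Dmap star a).comp (Dmap star b) := by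
  have h0 := Dcomp star hsd (⟨(b:ℕ), by omega⟩ : Fin (n+1))
    (⟨(a:ℕ)+1, by have := a.isLt; omega⟩ : Fin (n+2)) (by simp; omega)
  rw [h0]
  congr 1 <;> apply congrArg <;> exact Fin.ext (by simp)

include hsd in
lemma part1 (n : ℕ) : (tBd star n).comp (tBd star (n + 1)) = 0 := by
  classical
  rw [tBd_eq star (n+1), tBd_eq star n, sumComp]
  have step : ∀ p : Fin (n+1),
      (((-1:ℤ)^((p:ℕ)+1)) • Dmap star p).comp
          (∑ q : Fin (n+2), ((-1:ℤ)^((q:ℕ)+1)) • Dmap star q)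
        = ∑ q : Fin (n+2), (((-1:ℤ)^((p:ℕ)+1)) * ((-1:ℤ)^((q:ℕ)+1))) •
            ((Dmap star p).comp (Dmap star q)) := by
    intro p
    rw [LinearMap.smul_comp, compSum, Finset.smul_sum]
    refine Finset.sum_congr rfl fun q _ => ?_
    rw [LinearMap.comp_smul, smul_smul]
  refine Eq.trans (Finset.sum_congr rfl fun p _ => step p) ?_
  have hp : (∑ pq : Fin (n+1) × Fin (n+2), (((-1:ℤ)^((pq.1:ℕ)+1)) * ((-1:ℤ)^((pq.2:ℕ)+1))) •
      ((Dmap star pq.1).comp (Dmap star pq.2)))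
      = ∑ p : Fin (n+1), ∑ q : Fin (n+2), (((-1:ℤ)^((p:ℕ)+1)) * ((-1:ℤ)^((q:ℕ)+1))) •
          ((Dmap star p).comp (Dmap star q)) :=
    Fintype.sum_prod_type (f := fun pq : Fin (n+1) × Fin (n+2) =>
      (((-1:ℤ)^((pq.1:ℕ)+1)) * ((-1:ℤ)^((pq.2:ℕ)+1))) • ((Dmap star pq.1).comp (Dmap star pq.2)))
  rw [← hp]
  refine Finset.sum_ninvolution
    (g := fun pq : Fin (n+1) × Fin (n+2) =>
      if h : ((pq.1 : ℕ) < (pq.2 : ℕ)) then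
        ((⟨(pq.2:ℕ)-1, by have := pq.2.isLt; omega⟩ : Fin (n+1)),
         (⟨(pq.1:ℕ), by have := pq.1.isLt; omega⟩ : Fin (n+2)))
      else
        ((⟨(pq.2:ℕ), by have := pq.1.isLt; omega⟩ : Fin (n+1)),
         (⟨(pq.1:ℕ)+1, by have := pq.1.isLt; omega⟩ : Fin (n+2))))
    ?_ ?_ (fun _ => Finset.mem_univ _) ?_
  · rintro ⟨p, q⟩
    by_cases h : (p:ℕ) < (q:ℕ)
    · simp only [dif_pos h]
      rw [← Dcomp star hsd p q h, ← add_smul]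
      have hs : ((-1:ℤ)^((p:ℕ)+1)) * ((-1:ℤ)^((q:ℕ)+1)) +
          ((-1:ℤ)^(((q:ℕ)-1)+1)) * ((-1:ℤ)^((p:ℕ)+1)) = 0 := by
        rw [Nat.sub_add_cancel (by omega), pow_succ (-1:ℤ) (q:ℕ)]
        ring
      rw [hs, zero_smul]
    · simp only [dif_neg h]
      rw [Dcomp' star hsd p q (by omega), ← add_smul]
      have hs : ((-1:ℤ)^((p:ℕ)+1)) * ((-1:ℤ)^((q:ℕ)+1)) +
          ((-1:ℤ)^((q:ℕ)+1)) * ((-1:ℤ)^((p:ℕ)+1+1)) = 0 := by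
        rw [pow_succ (-1:ℤ) ((p:ℕ)+1)]
        ring
      rw [hs, zero_smul]
  · rintro ⟨p, q⟩ -
    by_cases h : (p:ℕ) < (q:ℕ)
    · simp only [dif_pos h]
      intro heq
      have h2 := congrArg (fun z : Fin (n+1) × Fin (n+2) => ((z.2 : Fin (n+2)) : ℕ)) heq
      simp at h2
      omega
    · simp only [dif_neg h]
      intro heq
      have h2 := congrArg (fun z : Fin (n+1) × Fin (n+2) => ((z.2 : Fin (n+2)) : ℕ)) heq
      have h3 := congrArg (fun z : Fin (n+1) × Fin (n+2) => ((z.1 : Fin (n+1)) : ℕ)) heq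
      simp at h2 h3
      omega
  · rintro ⟨p, q⟩
    by_cases h : (p:ℕ) < (q:ℕ)
    · simp only [dif_pos h]
      rw [dif_neg (show ¬((q:ℕ)-1 < (p:ℕ)) by omega)]
      exact Prod.ext (Fin.ext (by simp)) (Fin.ext (by simp; omega))
    · simp only [dif_neg h]
      rw [dif_pos (show ((q:ℕ) < (p:ℕ)+1) by omega)]
      exact Prod.ext (Fin.ext (by simp)) (Fin.ext (by simp))

end Part1

section Part2
open LaurentPolynomial
variable {X : Type*} (star : X → X → X) {n : ℕ} (t : Fin (n+1) → X) (x : X)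

lemma snoc_val {m : ℕ} (t : Fin m → X) (x : X) (j : Fin (m+1)) (h : (j:ℕ) < m) :
    (Fin.snoc t x : Fin (m+1) → X) j = t ⟨(j:ℕ), h⟩ := by
  cases j using Fin.lastCases with
  | last => exact absurd h (by simp)
  | cast i => rw [Fin.snoc_castSucc]; exact xeq t (by simp)

lemma snoc_val_last {m : ℕ} (t : Fin m → X) (x : X) (j : Fin (m+1)) (h : (j:ℕ) = m) :
    (Fin.snoc t x : Fin (m+1) → X) j = x := by
  cases j using Fin.lastCases with
  | last => rw [Fin.snoc_last]
  | cast i => exact absurd h (by first | omega | (simp only [Fin.coe_castSucc, Fin.val_last]; omega) | simp)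

lemma hZcast (p : Fin (n+1)) :
    faceZero (Fin.castSucc p) (Fin.snoc t x : Fin (n+2) → X) =
      (Fin.snoc (faceZero p t) x : Fin (n+1) → X) := by
  funext j
  rcases Nat.lt_or_ge (j:ℕ) (p:ℕ) with h1 | h1
  · rw [faceZero_lt (Fin.castSucc p) _ j (by first | omega | (simp only [Fin.coe_castSucc, Fin.val_last]; omega) | simp),
      snoc_val t x _ (by first | omega | (simp only [Fin.coe_castSucc, Fin.val_last]; omega) | simp), snoc_val (faceZero p t) x j (by first | omega | (simp only [Fin.coe_castSucc, Fin.val_last]; omega) | simp),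
      faceZero_lt p t _ (by first | omega | (simp only [Fin.coe_castSucc, Fin.val_last]; omega) | simp)]
  rcases Nat.lt_or_ge (j:ℕ) n with h2 | h2
  · rw [faceZero_ge (Fin.castSucc p) _ j (by first | omega | (simp only [Fin.coe_castSucc, Fin.val_last]; omega) | simp),
      snoc_val t x _ (by first | omega | (simp only [Fin.coe_castSucc, Fin.val_last]; omega) | simp), snoc_val (faceZero p t) x j (by first | omega | (simp only [Fin.coe_castSucc, Fin.val_last]; omega) | simp),
      faceZero_ge p t _ (by first | omega | (simp only [Fin.coe_castSucc, Fin.val_last]; omega) | simp)]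
  · rw [faceZero_ge (Fin.castSucc p) _ j (by first | omega | (simp only [Fin.coe_castSucc, Fin.val_last]; omega) | simp),
      snoc_val_last t x _ (by first | omega | (simp only [Fin.coe_castSucc, Fin.val_last]; omega) | simp), snoc_val_last (faceZero p t) x j (by first | omega | (simp only [Fin.coe_castSucc, Fin.val_last]; omega) | simp)]

lemma hScast (p : Fin (n+1)) :
    faceStar star (Fin.castSucc p) (Fin.snoc t x : Fin (n+2) → X) =
      (Fin.snoc (faceStar star p t) x : Fin (n+1) → X) := by
  funext j
  rcases Nat.lt_or_ge (j:ℕ) (p:ℕ) with h1 | h1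
  · rw [faceStar_lt star (Fin.castSucc p) _ j (by first | omega | (simp only [Fin.coe_castSucc, Fin.val_last]; omega) | simp),
      snoc_val t x _ (by first | omega | (simp only [Fin.coe_castSucc, Fin.val_last]; omega) | simp), Fin.snoc_castSucc,
      snoc_val (faceStar star p t) x j (by first | omega | (simp only [Fin.coe_castSucc, Fin.val_last]; omega) | simp),
      faceStar_lt star p t _ (by first | omega | (simp only [Fin.coe_castSucc, Fin.val_last]; omega) | simp)]
  rcases Nat.lt_or_ge (j:ℕ) n with h2 | h2
  · rw [faceStar_ge star (Fin.castSucc p) _ j (by first | omega | (simp only [Fin.coe_castSucc, Fin.val_last]; omega) | simp),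
      snoc_val t x _ (by first | omega | (simp only [Fin.coe_castSucc, Fin.val_last]; omega) | simp), snoc_val (faceStar star p t) x j (by first | omega | (simp only [Fin.coe_castSucc, Fin.val_last]; omega) | simp),
      faceStar_ge star p t _ (by first | omega | (simp only [Fin.coe_castSucc, Fin.val_last]; omega) | simp)]
  · rw [faceStar_ge star (Fin.castSucc p) _ j (by first | omega | (simp only [Fin.coe_castSucc, Fin.val_last]; omega) | simp),
      snoc_val_last t x _ (by first | omega | (simp only [Fin.coe_castSucc, Fin.val_last]; omega) | simp), snoc_val_last (faceStar star p t) x j (by first | omega | (simp only [Fin.coe_castSucc, Fin.val_last]; omega) | simp)]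

lemma hZlast : faceZero (Fin.last (n+1)) (Fin.snoc t x : Fin (n+2) → X) = t := by
  funext j
  rw [faceZero_lt (Fin.last (n+1)) _ j (by first | omega | (simp only [Fin.coe_castSucc, Fin.val_last]; omega) | simp), snoc_val t x _ (by first | omega | (simp only [Fin.coe_castSucc, Fin.val_last]; omega) | simp)]

lemma hSlast : faceStar star (Fin.last (n+1)) (Fin.snoc t x : Fin (n+2) → X) =
    fun j => star (t j) x := by
  funext j
  rw [faceStar_lt star (Fin.last (n+1)) _ j (by first | omega | (simp only [Fin.coe_castSucc, Fin.val_last]; omega) | simp), Fin.snoc_last,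
    snoc_val t x _ (by first | omega | (simp only [Fin.coe_castSucc, Fin.val_last]; omega) | simp)]

end Part2

section Final
open LaurentPolynomial
variable {X : Type*} (star : X → X → X)

lemma DH_cast {n : ℕ} (p : Fin (n+1)) (x : X) :
    (Dmap star (Fin.castSucc p)).comp (tHMap (n+1) x) = (tHMap n x).comp (Dmap star p) := by
  unfold Dmap tHMap
  have h1 : faceZero (Fin.castSucc p) ∘
        (fun t : Fin (n+1) → X => (Fin.snoc t x : Fin (n+2) → X))
      = (fun t : Fin n → X => (Fin.snoc t x : Fin (n+1) → X)) ∘ faceZero p :=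
    funext fun t => hZcast t x p
  have h2 : faceStar star (Fin.castSucc p) ∘
        (fun t : Fin (n+1) → X => (Fin.snoc t x : Fin (n+2) → X))
      = (fun t : Fin n → X => (Fin.snoc t x : Fin (n+1) → X)) ∘ faceStar star p :=
    funext fun t => hScast star t x p
  simp only [LinearMap.sub_comp, LinearMap.comp_sub, LinearMap.smul_comp, LinearMap.comp_smul,
    ← Finsupp.lmapDomain_comp, h1, h2]

lemma DH_last {n : ℕ} (x : X) :
    (Dmap star (Fin.last (n+1))).comp (tHMap (n+1) x)
      = (T 1 : LaurentPolynomial ℤ) • LinearMap.id - tMulMap star (n+1) x := by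
  unfold Dmap tHMap tMulMap
  have h1 : faceZero (Fin.last (n+1)) ∘
        (fun t : Fin (n+1) → X => (Fin.snoc t x : Fin (n+2) → X)) = id :=
    funext fun t => hZlast t x
  have h2 : faceStar star (Fin.last (n+1)) ∘
        (fun t : Fin (n+1) → X => (Fin.snoc t x : Fin (n+2) → X))
      = (fun t : Fin (n+1) → X => fun j => star (t j) x) :=
    funext fun t => hSlast star t x
  simp only [LinearMap.sub_comp, LinearMap.smul_comp, ← Finsupp.lmapDomain_comp, h1, h2,
    Finsupp.lmapDomain_id]

lemma part2 (n : ℕ) (x : X) :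
    ((-1 : ℤ) ^ (n + 2)) • ((tBd star (n + 1)).comp (tHMap (n + 1) x)) +
        ((-1 : ℤ) ^ (n + 1)) • ((tHMap n x).comp (tBd star n)) =
      (LaurentPolynomial.T 1 : LaurentPolynomial ℤ) • LinearMap.id -
        tMulMap star (n + 1) x := by
  rw [tBd_eq star (n+1), tBd_eq star n, sumComp, compSum, Fin.sum_univ_castSucc]
  have hA : ∀ p : Fin (n+1),
      ((((-1:ℤ)^(((Fin.castSucc p):ℕ)+1)) • Dmap star (Fin.castSucc p)).comp (tHMap (n+1) x))
        = ((-1:ℤ)^((p:ℕ)+1)) • ((tHMap n x).comp (Dmap star p)) := fun p => by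
    rw [LinearMap.smul_comp, DH_cast star p x, Fin.coe_castSucc]
  have hB : ∀ p : Fin (n+1), (tHMap n x).comp (((-1:ℤ)^((p:ℕ)+1)) • Dmap star p)
      = ((-1:ℤ)^((p:ℕ)+1)) • ((tHMap n x).comp (Dmap star p)) := fun p => by
    rw [LinearMap.comp_smul]
  have hL : ((((-1:ℤ)^(((Fin.last (n+1)):ℕ)+1)) • Dmap star (Fin.last (n+1))).comp (tHMap (n+1) x))
      = ((-1:ℤ)^(n+2)) • ((T 1 : LaurentPolynomial ℤ) • LinearMap.id - tMulMap star (n+1) x) := by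
    rw [LinearMap.smul_comp, DH_last star x, Fin.val_last]
  rw [Finset.sum_congr rfl (fun p _ => hA p), Finset.sum_congr rfl (fun p _ => hB p), hL]
  rw [smul_add, smul_smul, ← pow_add,
    (show (-1:ℤ)^((n+2)+(n+2)) = 1 from Even.neg_one_pow ⟨n+2, rfl⟩), one_smul,
    add_right_comm, ← add_smul,
    (show ((-1:ℤ)^(n+2) + (-1:ℤ)^(n+1)) = 0 from by rw [pow_succ (-1:ℤ) (n+1)]; ring),
    zero_smul, zero_add]

end Final

/-- For a rack `X`: the twisted boundary satisfies `∂^T ∂^T = 0`, and for any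
`x ∈ X` the map `*_x` is chain homotopic (via `(-1)^{m+1} h_x`) to `t·Id`;
hence `*_x` induces multiplication by `t` on twisted rack homology. -/
theorem stmt19 {X : Type*} (star : X → X → X)
    (hsd : ∀ a b c : X, star (star a b) c = star (star a c) (star b c))
    (hinv : ∀ b : X, Function.Bijective (fun a => star a b)) (n : ℕ) (x : X) :
    ((tBd star n).comp (tBd star (n + 1)) = 0) ∧
    (((-1 : ℤ) ^ (n + 2)) • ((tBd star (n + 1)).comp (tHMap (n + 1) x)) +
        ((-1 : ℤ) ^ (n + 1)) • ((tHMap n x).comp (tBd star n)) =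
      (LaurentPolynomial.T 1 : LaurentPolynomial ℤ) • LinearMap.id -
        tMulMap star (n + 1) x) := by
  exact ⟨part1 star hsd n, part2 star n x⟩
end
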